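/- arXiv:1203.5595 — 2 statements merged into one kernel-verified Lean document; each statement's English description precedes it below -/
import Mathlib

section
/- (Newton–Puiseux polygon formula) Let f ∈ ℂ{z₁}[z₂] be a unitary polynomial in z₂ with f(0,0)=0 and f(0,z₂) ≢ 0, and let m_ρ be the number of roots of f (counted with multiplicity, in a splitting extension of the fraction field of ℂ{z₁}) with valuation ρ ∈ ℚ>0 for the unique extension of the z₁-adic valuation. Then the Newton polygon of f satisfies N(f) = Σ_{ρ} {m_ρ·ρ / m_ρ}. -/
open Pointwise

/-- The positive quadrant in `ℝ²`. -/
def Q2 : Set (ℝ × ℝ) := {p | 0 ≤ p.1 ∧ 0 ≤ p.2}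

/-- The elementary Newton polygon `{ℓ/h}` with horizontal length `ℓ` and vertical height `h`. -/
noncomputable def elemPoly (l h : ℝ) : Set (ℝ × ℝ) :=
  convexHull ℝ (({((0 : ℝ), h)} + Q2) ∪ ({(l, (0 : ℝ))} + Q2))

/-- The Newton polygon of `f ∈ ℂ[[z₁]][z₂]`: the convex hull of
`⋃_{(a,b) ∈ Supp f} ((a,b) + ℝ≥0²)`, the exponent of `z₁` on the horizontal axis and the
exponent of `z₂` on the vertical axis. -/
noncomputable def newtonPolygon (f : Polynomial (PowerSeries ℂ)) : Set (ℝ × ℝ) :=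
  convexHull ℝ
    (⋃ p ∈ {p : ℕ × ℕ | PowerSeries.coeff p.1 (f.coeff p.2) ≠ 0},
      {((p.1 : ℝ), (p.2 : ℝ))} + Q2)


noncomputable def NP (S : Set (ℝ × ℝ)) : Set (ℝ × ℝ) := convexHull ℝ (S + Q2)

lemma Q2_convex : Convex ℝ Q2 := by
  have : Q2 = {p : ℝ × ℝ | 0 ≤ p.1} ∩ {p | 0 ≤ p.2} := rfl
  rw [this]
  exact (convex_halfSpace_ge (LinearMap.isLinear (LinearMap.fst ℝ ℝ ℝ)) 0).inter
    (convex_halfSpace_ge (LinearMap.isLinear (LinearMap.snd ℝ ℝ ℝ)) 0)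

lemma Q2_zero : (0 : ℝ × ℝ) ∈ Q2 := ⟨le_refl 0, le_refl 0⟩

lemma Q2_add_Q2 : Q2 + Q2 = Q2 := by
  apply subset_antisymm
  · rintro p ⟨a, ha, b, hb, rfl⟩
    exact ⟨add_nonneg ha.1 hb.1, add_nonneg ha.2 hb.2⟩
  · intro p hp
    exact ⟨p, hp, 0, Q2_zero, (add_zero p)⟩

lemma convexHull_Q2 : convexHull ℝ Q2 = Q2 := Q2_convex.convexHull_eq

lemma NP_add (S T : Set (ℝ × ℝ)) : NP S + NP T = NP (S + T) := by
  unfold NP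
  rw [← convexHull_add]
  congr 1
  rw [add_assoc, add_comm Q2 (T + Q2), add_assoc, Q2_add_Q2, add_assoc]

lemma NP_convex (S : Set (ℝ × ℝ)) : Convex ℝ (NP S) := convex_convexHull ℝ _

lemma subset_NP (S : Set (ℝ × ℝ)) : S ⊆ NP S := fun p hp =>
  subset_convexHull ℝ _ ⟨p, hp, 0, Q2_zero, add_zero p⟩

lemma NP_add_Q2_mem {S : Set (ℝ × ℝ)} {p : ℝ × ℝ} (hp : p ∈ NP S) {u : ℝ × ℝ} (hu : u ∈ Q2) :
    p + u ∈ NP S := by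
  have h : NP S + Q2 ⊆ NP S := by
    have : NP S + Q2 = NP S + convexHull ℝ Q2 := by rw [convexHull_Q2]
    rw [this]
    unfold NP
    rw [← convexHull_add, add_assoc, Q2_add_Q2]
  exact h ⟨p, hp, u, hu, rfl⟩

lemma NP_subset_of_subset {S T : Set (ℝ × ℝ)} (h : S ⊆ NP T) : NP S ⊆ NP T := by
  apply convexHull_min _ (NP_convex T)
  rintro p ⟨a, ha, u, hu, rfl⟩
  exact NP_add_Q2_mem (h ha) hu

lemma NP_mono {S T : Set (ℝ × ℝ)} (h : S ⊆ T) : NP S ⊆ NP T :=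
  NP_subset_of_subset (fun p hp => subset_NP T (h hp))

lemma segment_mem_NP {S : Set (ℝ × ℝ)} {p q : ℝ × ℝ} (hp : p ∈ S) (hq : q ∈ S)
    {a b : ℝ} (ha : 0 ≤ a) (hb : 0 ≤ b) (hab : a + b = 1) :
    a • p + b • q ∈ NP S :=
  (NP_convex S) (subset_NP S hp) (subset_NP S hq) ha hb hab

def XF (F : Finset ℚ) (m : ℚ → ℕ) (c : ℚ) : ℚ := ∑ τ ∈ F.filter (fun τ => τ ≤ c), (m τ : ℚ) * τ
def YF (F : Finset ℚ) (m : ℚ → ℕ) (c : ℚ) : ℕ := ∑ τ ∈ F.filter (fun τ => c < τ), m τ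
noncomputable def MidSet (F : Finset ℚ) (m : ℚ → ℕ) : Set (ℝ × ℝ) :=
  (fun c : ℚ => ((XF F m c : ℝ), (YF F m c : ℝ))) '' Set.Ici 0

lemma XF_zero (F : Finset ℚ) (m : ℚ → ℕ) (hFpos : ∀ τ ∈ F, 0 < τ) : XF F m 0 = 0 := by
  unfold XF
  rw [Finset.filter_false_of_mem, Finset.sum_empty]
  intro τ hτ
  exact not_le.mpr (hFpos τ hτ)

lemma YF_zero (F : Finset ℚ) (m : ℚ → ℕ) (hFpos : ∀ τ ∈ F, 0 < τ) :
    YF F m 0 = ∑ τ ∈ F, m τ := by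
  unfold YF
  rw [Finset.filter_true_of_mem]
  intro τ hτ
  exact hFpos τ hτ

lemma mem_NP_Mid (F : Finset ℚ) (m : ℚ → ℕ) (hFpos : ∀ τ ∈ F, 0 < τ)
    (x : ℝ) (k : ℕ)
    (hx : ∀ c : ℚ, 0 ≤ c →
      ((XF F m c : ℝ) + ((YF F m c : ℝ) - (k : ℝ)) * (c : ℝ)) ≤ x) :
    (x, (k : ℝ)) ∈ NP (MidSet F m) := by
  classical
  set M : ℕ := ∑ τ ∈ F, m τ with hM
  have hp0 : ((0 : ℝ), (M : ℝ)) ∈ MidSet F m := by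
    refine ⟨0, Set.mem_Ici.mpr (le_refl 0), ?_⟩
    simp only [XF_zero F m hFpos, YF_zero F m hFpos]
    rw [hM]
    push_cast
    simp
  have hx0 : 0 ≤ x := by
    have := hx 0 (le_refl 0)
    rw [XF_zero F m hFpos] at this
    push_cast at this
    linarith
  by_cases hkM : M ≤ k
  · -- above the top vertex
    have : (x, (k : ℝ)) = ((0 : ℝ), (M : ℝ)) + (x, (k : ℝ) - M) := by
      ext <;> simp
    rw [this]
    refine NP_add_Q2_mem (subset_NP _ hp0) ⟨hx0, ?_⟩
    simp only
    have : (M : ℝ) ≤ k := by exact_mod_cast hkM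
    linarith
  · push_neg at hkM
    -- F nonempty
    have hFne : F.Nonempty := by
      by_contra h
      rw [Finset.not_nonempty_iff_eq_empty] at h
      rw [h] at hM
      simp at hM
      omega
    -- the set of candidate c's
    set Cand := F.filter (fun τ => YF F m τ ≤ k) with hCand
    have hCandne : Cand.Nonempty := by
      refine ⟨F.max' hFne, Finset.mem_filter.mpr ⟨F.max'_mem hFne, ?_⟩⟩
      unfold YF
      rw [Finset.filter_false_of_mem, Finset.sum_empty]
      · omega
      · intro τ hτ
        exact not_lt.mpr (F.le_max' τ hτ)
    set c : ℚ := Cand.min' hCandne with hc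
    have hcF : c ∈ F := (Finset.mem_filter.mp (Cand.min'_mem hCandne)).1
    have hcpos : 0 < c := hFpos c hcF
    have hYck : YF F m c ≤ k := (Finset.mem_filter.mp (Cand.min'_mem hCandne)).2
    set G := F.filter (fun τ => τ < c) with hG
    set c' : ℚ := if h : G.Nonempty then G.max' h else 0 with hc'
    have hc'0 : 0 ≤ c' := by
      rw [hc']
      split_ifs with h
      · exact le_of_lt (hFpos _ (Finset.mem_filter.mp (G.max'_mem h)).1)
      · exact le_refl 0
    have hc'c : c' < c := by
      rw [hc']
      split_ifs with h
      · exact (Finset.mem_filter.mp (G.max'_mem h)).2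
      · exact hcpos
    have hfilter1 : F.filter (fun τ => τ ≤ c') = G := by
      ext τ
      simp only [Finset.mem_filter, hG]
      constructor
      · rintro ⟨h1, h2⟩
        exact ⟨h1, lt_of_le_of_lt h2 hc'c⟩
      · rintro ⟨h1, h2⟩
        refine ⟨h1, ?_⟩
        rw [hc']
        split_ifs with h
        · exact G.le_max' τ (Finset.mem_filter.mpr ⟨h1, h2⟩)
        · exfalso
          exact h ⟨τ, Finset.mem_filter.mpr ⟨h1, h2⟩⟩
    have hfilter2 : F.filter (fun τ => c' < τ) = F.filter (fun τ => c ≤ τ) := by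
      ext τ
      simp only [Finset.mem_filter]
      constructor
      · rintro ⟨h1, h2⟩
        refine ⟨h1, ?_⟩
        by_contra hlt
        push_neg at hlt
        have : τ ∈ G := Finset.mem_filter.mpr ⟨h1, hlt⟩
        have : τ ≤ c' := by
          have := hfilter1 ▸ this
          exact (Finset.mem_filter.mp this).2
        linarith
      · rintro ⟨h1, h2⟩
        exact ⟨h1, lt_of_lt_of_le hc'c h2⟩
    -- split at c
    have hsplitY : YF F m c' = m c + YF F m c := by
      unfold YF
      rw [hfilter2]
      have : F.filter (fun τ => c ≤ τ) = insert c (F.filter (fun τ => c < τ)) := by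
        ext τ
        simp only [Finset.mem_filter, Finset.mem_insert]
        constructor
        · rintro ⟨h1, h2⟩
          rcases eq_or_lt_of_le h2 with h | h
          · exact Or.inl h.symm
          · exact Or.inr ⟨h1, h⟩
        · rintro (rfl | ⟨h1, h2⟩)
          · exact ⟨hcF, le_refl _⟩
          · exact ⟨h1, le_of_lt h2⟩
      rw [this, Finset.sum_insert (by simp)]
    have hsplitX : XF F m c = XF F m c' + (m c : ℚ) * c := by
      unfold XF
      rw [hfilter1]
      have : F.filter (fun τ => τ ≤ c) = insert c G := by
        ext τ
        simp only [Finset.mem_filter, Finset.mem_insert, hG]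
        constructor
        · rintro ⟨h1, h2⟩
          rcases eq_or_lt_of_le h2 with h | h
          · exact Or.inl h
          · exact Or.inr ⟨h1, h⟩
        · rintro (rfl | ⟨h1, h2⟩)
          · exact ⟨hcF, le_refl _⟩
          · exact ⟨h1, le_of_lt h2⟩
      rw [this, Finset.sum_insert (by simp [hG])]
      ring
    have hkY' : k < YF F m c' := by
      by_contra h
      push_neg at h
      rw [hc'] at h
      by_cases hGne : G.Nonempty
      · rw [dif_pos hGne] at h
        have hmem : G.max' hGne ∈ Cand := Finset.mem_filter.mpr
          ⟨(Finset.mem_filter.mp (G.max'_mem hGne)).1, h⟩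
        have := Cand.min'_le _ hmem
        have h2 : G.max' hGne < c := (Finset.mem_filter.mp (G.max'_mem hGne)).2
        rw [← hc] at this
        linarith
      · rw [dif_neg hGne] at h
        rw [YF_zero F m hFpos, ← hM] at h
        omega
    have hmcpos : 0 < m c := by
      omega
    -- convex combination
    set μ : ℝ := ((k : ℝ) - (YF F m c : ℝ)) / (m c : ℝ) with hμ
    have hmcR : (0:ℝ) < (m c : ℝ) := by exact_mod_cast hmcpos
    have hμ0 : 0 ≤ μ := by
      apply div_nonneg _ (le_of_lt hmcR)
      have : (YF F m c : ℝ) ≤ k := by exact_mod_cast hYck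
      linarith
    have hμ1 : μ ≤ 1 := by
      rw [div_le_one hmcR]
      have : (k : ℝ) < (YF F m c' : ℝ) := by exact_mod_cast hkY'
      have h2 : (YF F m c' : ℝ) = (m c : ℝ) + (YF F m c : ℝ) := by
        exact_mod_cast congrArg (Nat.cast : ℕ → ℝ) hsplitY
      linarith
    have hP : ((XF F m c : ℝ), (YF F m c : ℝ)) ∈ MidSet F m := ⟨c, le_of_lt hcpos, rfl⟩
    have hP' : ((XF F m c' : ℝ), (YF F m c' : ℝ)) ∈ MidSet F m := ⟨c', hc'0, rfl⟩
    have hcombo : μ • ((XF F m c' : ℝ), (YF F m c' : ℝ))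
        + (1 - μ) • ((XF F m c : ℝ), (YF F m c : ℝ)) ∈ NP (MidSet F m) := by
      apply segment_mem_NP hP' hP hμ0 (by linarith) (by ring)
    have hXc' : (XF F m c' : ℝ) = (XF F m c : ℝ) - (m c : ℝ) * c := by
      have := congrArg (Rat.cast : ℚ → ℝ) hsplitX
      push_cast at this
      linarith
    have hYc' : (YF F m c' : ℝ) = (m c : ℝ) + (YF F m c : ℝ) := by
      exact_mod_cast congrArg (Nat.cast : ℕ → ℝ) hsplitY
    have hμm : μ * (m c : ℝ) = (k : ℝ) - (YF F m c : ℝ) := by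
      rw [hμ]
      field_simp
    have hkey : (x, (k:ℝ)) = (μ • ((XF F m c' : ℝ), (YF F m c' : ℝ))
        + (1 - μ) • ((XF F m c : ℝ), (YF F m c : ℝ)))
        + (x - ((XF F m c : ℝ) + ((YF F m c : ℝ) - (k:ℝ)) * (c:ℝ)), 0) := by
      have h1 : μ * (XF F m c' : ℝ) + (1 - μ) * (XF F m c : ℝ)
          = (XF F m c : ℝ) + ((YF F m c : ℝ) - (k:ℝ)) * (c:ℝ) := by
        rw [hXc']
        linear_combination (-(c:ℝ)) * hμm
      have h2 : μ * (YF F m c' : ℝ) + (1 - μ) * (YF F m c : ℝ) = (k : ℝ) := by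
        rw [hYc']
        linear_combination hμm
      ext
      · simp only [Prod.fst_add, Prod.smul_fst, smul_eq_mul]
        rw [h1]; ring
      · simp only [Prod.snd_add, Prod.smul_snd, smul_eq_mul]
        rw [h2]; ring
    rw [hkey]
    apply NP_add_Q2_mem hcombo
    refine ⟨?_, le_refl 0⟩
    simp only
    have := hx c (le_of_lt hcpos)
    linarith

lemma finset_L1 (F : Finset ℚ) (m : ℚ → ℕ) (hFpos : ∀ τ ∈ F, 0 < τ)
    (B : Finset ℚ) (hB : B ⊆ F) (c : ℚ) (hc : 0 ≤ c) :
    XF F m c + ((YF F m c : ℚ) - (∑ τ ∈ F \ B, m τ : ℕ)) * c ≤ ∑ τ ∈ B, (m τ : ℚ) * τ := by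
  classical
  set B1 := B.filter (fun τ => τ ≤ c) with hB1
  set B2 := B.filter (fun τ => ¬ τ ≤ c) with hB2
  have hBsplit : (∑ τ ∈ B, (m τ : ℚ) * τ) = (∑ τ ∈ B1, (m τ : ℚ) * τ) + ∑ τ ∈ B2, (m τ : ℚ) * τ :=
    (Finset.sum_filter_add_sum_filter_not B _ _).symm
  have hB1sub : B1 ⊆ F.filter (fun τ => τ ≤ c) := by
    intro τ hτ
    rw [Finset.mem_filter] at hτ ⊢
    exact ⟨hB hτ.1, hτ.2⟩
  -- diff sum
  have hXsplit : XF F m c = (∑ τ ∈ (F.filter (fun τ => τ ≤ c)) \ B1, (m τ : ℚ) * τ)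
      + ∑ τ ∈ B1, (m τ : ℚ) * τ := (Finset.sum_sdiff hB1sub).symm
  have hdiff_le : (∑ τ ∈ (F.filter (fun τ => τ ≤ c)) \ B1, (m τ : ℚ) * τ)
      ≤ ∑ τ ∈ (F.filter (fun τ => τ ≤ c)) \ B1, (m τ : ℚ) * c := by
    apply Finset.sum_le_sum
    intro τ hτ
    have h1 : τ ≤ c := (Finset.mem_filter.mp (Finset.mem_sdiff.mp hτ).1).2
    have h2 : (0:ℚ) ≤ m τ := Nat.cast_nonneg _
    nlinarith
  have hB2_ge : (∑ τ ∈ B2, (m τ : ℚ) * c) ≤ ∑ τ ∈ B2, (m τ : ℚ) * τ := by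
    apply Finset.sum_le_sum
    intro τ hτ
    have h1 : ¬ τ ≤ c := (Finset.mem_filter.mp hτ).2
    have h2 : (0:ℚ) ≤ m τ := Nat.cast_nonneg _
    push_neg at h1
    nlinarith
  -- cardinal identity: D + Y - K = |B2|  where everything as ℚ sums of m
  have hcount : (∑ τ ∈ (F.filter (fun τ => τ ≤ c)) \ B1, (m τ : ℚ))
      + (YF F m c : ℚ) - (∑ τ ∈ F \ B, m τ : ℕ) = ∑ τ ∈ B2, (m τ : ℚ) := by
    have e1 : (∑ τ ∈ F.filter (fun τ => τ ≤ c), (m τ : ℚ))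
        = (∑ τ ∈ (F.filter (fun τ => τ ≤ c)) \ B1, (m τ : ℚ)) + ∑ τ ∈ B1, (m τ : ℚ) :=
      (Finset.sum_sdiff hB1sub).symm
    have e2 : (∑ τ ∈ F, (m τ : ℚ)) = (∑ τ ∈ F.filter (fun τ => τ ≤ c), (m τ : ℚ))
        + ∑ τ ∈ F.filter (fun τ => ¬ τ ≤ c), (m τ : ℚ) :=
      (Finset.sum_filter_add_sum_filter_not F _ _).symm
    have e3 : (∑ τ ∈ F, (m τ : ℚ)) = (∑ τ ∈ F \ B, (m τ : ℚ)) + ∑ τ ∈ B, (m τ : ℚ) :=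
      (Finset.sum_sdiff hB).symm
    have e4 : (∑ τ ∈ B, (m τ : ℚ)) = (∑ τ ∈ B1, (m τ : ℚ)) + ∑ τ ∈ B2, (m τ : ℚ) :=
      (Finset.sum_filter_add_sum_filter_not B _ _).symm
    have e5 : (YF F m c : ℚ) = ∑ τ ∈ F.filter (fun τ => ¬ τ ≤ c), (m τ : ℚ) := by
      unfold YF
      rw [Nat.cast_sum]
      apply Finset.sum_congr _ (fun _ _ => rfl)
      apply Finset.filter_congr
      intro τ _
      simp [not_le]
    have e6 : ((∑ τ ∈ F \ B, m τ : ℕ) : ℚ) = ∑ τ ∈ F \ B, (m τ : ℚ) := Nat.cast_sum _ _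
    rw [e5, e6]
    linarith [e1, e2, e3, e4]
  have hYB2 : ((YF F m c : ℚ) - (∑ τ ∈ F \ B, m τ : ℕ)) * c
      ≤ (∑ τ ∈ B2, (m τ : ℚ) * c) - (∑ τ ∈ (F.filter (fun τ => τ ≤ c)) \ B1, (m τ : ℚ) * c) := by
    have : (∑ τ ∈ B2, (m τ : ℚ) * c) = (∑ τ ∈ B2, (m τ : ℚ)) * c := by
      rw [Finset.sum_mul]
    rw [this]
    have : (∑ τ ∈ (F.filter (fun τ => τ ≤ c)) \ B1, (m τ : ℚ) * c)
        = (∑ τ ∈ (F.filter (fun τ => τ ≤ c)) \ B1, (m τ : ℚ)) * c := by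
      rw [Finset.sum_mul]
    rw [this]
    nlinarith [hcount]
  rw [hBsplit, hXsplit]
  linarith

lemma mem_finsetSum {ι : Type*} [DecidableEq ι] (s : Finset ι) (S : ι → Set (ℝ × ℝ))
    (q : ℝ × ℝ) (hq : q ∈ ∑ i ∈ s, S i) :
    ∃ g : ι → ℝ × ℝ, (∀ i ∈ s, g i ∈ S i) ∧ q = ∑ i ∈ s, g i := by
  classical
  induction s using Finset.induction_on generalizing q with
  | empty =>
    refine ⟨fun _ => 0, by simp, ?_⟩
    simpa using hq
  | @insert a s ha ih =>
    rw [Finset.sum_insert ha] at hq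
    obtain ⟨u, hu, w, hw, huw⟩ := hq
    obtain ⟨g, hg1, hg2⟩ := ih w hw
    refine ⟨Function.update g a u, ?_, ?_⟩
    · intro i hi
      rcases Finset.mem_insert.mp hi with rfl | hi2
      · rw [Function.update_self]; exact hu
      · rw [Function.update_of_ne (by rintro rfl; exact ha hi2)]; exact hg1 i hi2
    · rw [Finset.sum_insert ha, Function.update_self, ← huw]
      congr 1
      rw [hg2]
      apply Finset.sum_congr rfl
      intro i hi
      rw [Function.update_of_ne (by rintro rfl; exact ha hi)]

lemma finsetSum_mem {ι : Type*} (s : Finset ι) (S : ι → Set (ℝ × ℝ))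
    (g : ι → ℝ × ℝ) (h : ∀ i ∈ s, g i ∈ S i) :
    (∑ i ∈ s, g i) ∈ ∑ i ∈ s, S i := by
  classical
  induction s using Finset.induction_on with
  | empty => simp
  | @insert a s ha ih =>
    rw [Finset.sum_insert ha, Finset.sum_insert ha]
    exact ⟨g a, h a (Finset.mem_insert_self a s),
      ∑ i ∈ s, g i, ih (fun i hi => h i (Finset.mem_insert_of_mem hi)), rfl⟩

lemma Q2_add_sum_NP {ι : Type*} (s : Finset ι) (S : ι → Set (ℝ × ℝ)) :
    Q2 + ∑ i ∈ s, NP (S i) = NP (∑ i ∈ s, S i) := by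
  classical
  induction s using Finset.induction_on with
  | empty =>
    simp only [Finset.sum_empty]
    unfold NP
    rw [add_zero, zero_add, convexHull_Q2]
  | @insert a s ha ih =>
    rw [Finset.sum_insert ha, Finset.sum_insert ha, ← NP_add, ← ih]
    rw [← add_assoc, add_comm Q2 (NP (S a)), add_assoc]

section Val
variable {L : Type*} [Field L] (v : L → ℚ)
  (hv_mul : ∀ x y : L, x ≠ 0 → y ≠ 0 → v (x * y) = v x + v y)
  (hv_add : ∀ x y : L, x ≠ 0 → y ≠ 0 → x + y ≠ 0 → min (v x) (v y) ≤ v (x + y))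

include hv_mul

lemma v_one : v 1 = 0 := by
  have := hv_mul 1 1 one_ne_zero one_ne_zero
  simp at this; linarith

lemma v_neg (x : L) (hx : x ≠ 0) : v (-x) = v x := by
  have hm1 : v (-1 : L) = 0 := by
    have := hv_mul (-1) (-1) (by norm_num) (by norm_num)
    simp at this
    have h1 := v_one v hv_mul
    rw [h1] at this; linarith
  have := hv_mul (-1) x (by norm_num) hx
  simpa [hm1] using this

lemma v_pow (x : L) (hx : x ≠ 0) (m : ℕ) : v (x ^ m) = m * v x := by
  induction m with
  | zero => simpa using v_one v hv_mul
  | succ k ih =>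
    rw [pow_succ, hv_mul _ _ (pow_ne_zero _ hx) hx, ih]
    push_cast; ring

lemma v_prod (M : Multiset L) (h : ∀ x ∈ M, x ≠ 0) :
    M.prod ≠ 0 ∧ v M.prod = (M.map v).sum := by
  induction M using Multiset.induction_on with
  | empty => simp [v_one v hv_mul]
  | cons a M ih =>
    have ha : a ≠ 0 := h a (Multiset.mem_cons_self a M)
    have hM : ∀ x ∈ M, x ≠ 0 := fun x hx => h x (Multiset.mem_cons_of_mem hx)
    obtain ⟨h1, h2⟩ := ih hM
    constructor
    · simpa using mul_ne_zero ha h1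
    · rw [Multiset.prod_cons, hv_mul a M.prod ha h1, h2, Multiset.map_cons,
        Multiset.sum_cons]

include hv_add

lemma v_sum_lt (M : Multiset L) (c : ℚ) (h : ∀ x ∈ M, x = 0 ∨ (x ≠ 0 ∧ c < v x)) :
    M.sum = 0 ∨ (M.sum ≠ 0 ∧ c < v M.sum) := by
  induction M using Multiset.induction_on with
  | empty => simp
  | cons a M ih =>
    have hM := ih (fun x hx => h x (Multiset.mem_cons_of_mem hx))
    have ha := h a (Multiset.mem_cons_self a M)
    rw [Multiset.sum_cons]
    rcases ha with rfl | ⟨ha0, hav⟩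
    · simpa using hM
    rcases hM with hs0 | ⟨hs0, hsv⟩
    · rw [hs0, add_zero]; exact Or.inr ⟨ha0, hav⟩
    by_cases hz : a + M.sum = 0
    · exact Or.inl hz
    · refine Or.inr ⟨hz, ?_⟩
      have := hv_add a M.sum ha0 hs0 hz
      exact lt_of_lt_of_le (lt_min hav hsv) this

lemma v_add_eq_left (a b : L) (ha : a ≠ 0) (hb : b = 0 ∨ (b ≠ 0 ∧ v a < v b)) :
    a + b ≠ 0 ∧ v (a + b) = v a := by
  rcases hb with rfl | ⟨hb0, hab⟩
  · simpa using ha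
  have hz : a + b ≠ 0 := by
    intro h
    have hb : b = -a := by linear_combination h - a
    rw [hb, v_neg v hv_mul a ha] at hab
    exact lt_irrefl _ hab
  refine ⟨hz, le_antisymm ?_ ?_⟩
  · have h2 := hv_add (a + b) (-b) hz (neg_ne_zero.mpr hb0) (by simpa using ha)
    rw [add_neg_cancel_right, v_neg v hv_mul b hb0] at h2
    rcases le_or_gt (v (a+b)) (v a) with h | h
    · exact h
    · exfalso
      rw [min_def] at h2
      split_ifs at h2 <;> linarith
  · have := hv_add a b ha hb0 hz
    rw [min_def] at this
    split_ifs at this <;> linarith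

lemma v_sum_strict (x : L) (M : Multiset L) (hx : x ≠ 0)
    (h : ∀ y ∈ M, y = 0 ∨ (y ≠ 0 ∧ v x < v y)) :
    (x ::ₘ M).sum ≠ 0 ∧ v (x ::ₘ M).sum = v x := by
  rw [Multiset.sum_cons]
  rcases v_sum_lt v hv_mul hv_add M (v x) h with h0 | ⟨h0, hlt⟩
  · rw [h0, add_zero]; exact ⟨hx, rfl⟩
  · exact v_add_eq_left v hv_mul hv_add x M.sum hx (Or.inr ⟨h0, hlt⟩)

omit hv_mul in
lemma v_sum_le (M : Multiset L) (c : ℚ) (h : ∀ x ∈ M, x = 0 ∨ (x ≠ 0 ∧ c ≤ v x)) :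
    M.sum = 0 ∨ (M.sum ≠ 0 ∧ c ≤ v M.sum) := by
  induction M using Multiset.induction_on with
  | empty => simp
  | cons a M ih =>
    have hM := ih (fun x hx => h x (Multiset.mem_cons_of_mem hx))
    have ha := h a (Multiset.mem_cons_self a M)
    rw [Multiset.sum_cons]
    rcases ha with rfl | ⟨ha0, hav⟩
    · simpa using hM
    rcases hM with hs0 | ⟨hs0, hsv⟩
    · rw [hs0, add_zero]; exact Or.inr ⟨ha0, hav⟩
    by_cases hz : a + M.sum = 0
    · exact Or.inl hz
    · refine Or.inr ⟨hz, ?_⟩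
      have := hv_add a M.sum ha0 hs0 hz
      exact le_trans (le_min hav hsv) this

end Val

section CombM
open Multiset

/-- L1: exchange lower bound. -/
lemma sum_filter_le_sum {α : Type*} (w : α → ℚ) (t : ℚ) (R S : Multiset α)
    [DecidablePred (fun a => w a ≤ t)]
    (hS : S ≤ R) :
    ((R.filter (fun a => w a ≤ t)).map w).sum
      + ((S.card : ℚ) - ((R.filter (fun a => w a ≤ t)).card : ℚ)) * t
      ≤ (S.map w).sum := by
  classical
  set Rf := R.filter (fun a => w a ≤ t) with hRf
  set Sf := S.filter (fun a => w a ≤ t) with hSf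
  set Sg := S.filter (fun a => ¬ w a ≤ t) with hSg
  have hSsplit : Sf + Sg = S := filter_add_not _ S
  have hSfle : Sf ≤ Rf := filter_le_filter _ hS
  obtain ⟨T, hT⟩ := Multiset.le_iff_exists_add.mp hSfle
  -- sums
  have hsumS : (S.map w).sum = ((Sf.map w).sum + (Sg.map w).sum) := by
    rw [← hSsplit]; simp
  have hsumRf : ((Rf.map w).sum) = (Sf.map w).sum + (T.map w).sum := by
    rw [hT]; simp
  have hcardRf : (Rf.card : ℚ) = Sf.card + T.card := by
    rw [hT]; push_cast [Multiset.card_add]; ring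
  have hcardS : (S.card : ℚ) = Sf.card + Sg.card := by
    rw [← hSsplit]; push_cast [Multiset.card_add]; ring
  have hT_le : (T.map w).sum ≤ (T.card : ℚ) * t := by
    have h1 : ∀ x ∈ T.map w, x ≤ t := by
      intro x hx
      obtain ⟨a, haT, rfl⟩ := Multiset.mem_map.mp hx
      have : a ∈ Rf := by rw [hT]; exact mem_add.mpr (Or.inr haT)
      exact (mem_filter.mp this).2
    have := Multiset.sum_le_card_nsmul (T.map w) t h1
    simpa [nsmul_eq_mul] using this
  have hSg_ge : (Sg.card : ℚ) * t ≤ (Sg.map w).sum := by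
    have h1 : ∀ x ∈ Sg.map w, t ≤ x := by
      intro x hx
      obtain ⟨a, haT, rfl⟩ := Multiset.mem_map.mp hx
      have := (mem_filter.mp haT).2
      simp only [not_le] at this
      exact le_of_lt this
    have := Multiset.card_nsmul_le_sum h1
    simpa [nsmul_eq_mul] using this
  rw [hsumS, hsumRf, hcardRf, hcardS]
  nlinarith [hT_le, hSg_ge]

/-- Strict uniqueness: any other submultiset of the same size has strictly bigger sum. -/
lemma sum_filter_lt_sum {α : Type*} (w : α → ℚ) (t : ℚ) (R S : Multiset α)
    [DecidablePred (fun a => w a ≤ t)]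
    (hS : S ≤ R) (hcard : S.card = (R.filter (fun a => w a ≤ t)).card)
    (hne : S ≠ R.filter (fun a => w a ≤ t)) :
    ((R.filter (fun a => w a ≤ t)).map w).sum < (S.map w).sum := by
  classical
  set Rf := R.filter (fun a => w a ≤ t) with hRf
  set Sf := S.filter (fun a => w a ≤ t) with hSf
  set Sg := S.filter (fun a => ¬ w a ≤ t) with hSg
  have hSsplit : Sf + Sg = S := filter_add_not _ S
  have hSfle : Sf ≤ Rf := filter_le_filter _ hS
  obtain ⟨T, hT⟩ := Multiset.le_iff_exists_add.mp hSfle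
  have hSgne : Sg ≠ 0 := by
    intro h0
    rw [h0, add_zero] at hSsplit
    apply hne
    rw [← hSsplit] at hcard ⊢
    exact Multiset.eq_of_le_of_card_le hSfle (le_of_eq hcard.symm)
  obtain ⟨b, hbmem⟩ := Multiset.exists_mem_of_ne_zero hSgne
  obtain ⟨Sg', hb⟩ := Multiset.exists_cons_of_mem hbmem
  have hsumS : (S.map w).sum = ((Sf.map w).sum + (Sg.map w).sum) := by
    rw [← hSsplit]; simp
  have hsumRf : ((Rf.map w).sum) = (Sf.map w).sum + (T.map w).sum := by
    rw [hT]; simp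
  have hcardT : T.card = Sg.card := by
    have h1 : Rf.card = Sf.card + T.card := by rw [hT, Multiset.card_add]
    have h2 : S.card = Sf.card + Sg.card := by rw [← hSsplit, Multiset.card_add]
    omega
  have hT_le : (T.map w).sum ≤ (T.card : ℚ) * t := by
    have h1 : ∀ x ∈ T.map w, x ≤ t := by
      intro x hx
      obtain ⟨a, haT, rfl⟩ := Multiset.mem_map.mp hx
      have : a ∈ Rf := by rw [hT]; exact mem_add.mpr (Or.inr haT)
      exact (mem_filter.mp this).2
    have := Multiset.sum_le_card_nsmul (T.map w) t h1
    simpa [nsmul_eq_mul] using this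
  have hSg_gt : (Sg.card : ℚ) * t < (Sg.map w).sum := by
    have hball : ∀ a ∈ Sg, t < w a := by
      intro a ha
      have := (mem_filter.mp ha).2
      simpa [not_le] using this
    rw [hb]
    have hb' : t < w b := hball b (by rw [hb]; exact mem_cons_self b Sg')
    have h1 : ∀ x ∈ Sg'.map w, t ≤ x := by
      intro x hx
      obtain ⟨a, haT, rfl⟩ := Multiset.mem_map.mp hx
      exact le_of_lt (hball a (by rw [hb]; exact mem_cons_of_mem haT))
    have h2 := Multiset.card_nsmul_le_sum h1
    simp only [Multiset.map_cons, Multiset.sum_cons, Multiset.card_cons]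
    push_cast
    rw [nsmul_eq_mul, Multiset.card_map] at h2
    nlinarith
  rw [hsumS, hsumRf]
  have hTQ : (T.card : ℚ) = Sg.card := by exact_mod_cast congrArg Nat.cast hcardT
  have : (map w T).sum < (map w Sg).sum := by
    calc (map w T).sum ≤ (T.card : ℚ) * t := hT_le
    _ = (Sg.card : ℚ) * t := by rw [hTQ]
    _ < (map w Sg).sum := hSg_gt
  linarith

/-- The canonical filter submultiset occurs exactly once in `powersetCard`. -/
lemma count_powersetCard_filter {α : Type*} [DecidableEq α] (p : α → Prop) [DecidablePred p]
    (R : Multiset α) :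
    (R.powersetCard ((R.filter p).card)).count (R.filter p) = 1 := by
  induction R using Multiset.induction_on with
  | empty => simp
  | cons a M ih =>
    by_cases hpa : p a
    · rw [Multiset.filter_cons_of_pos _ hpa]
      have hcard : ((a ::ₘ M.filter p)).card = (M.filter p).card + 1 := by simp
      rw [hcard, Multiset.powersetCard_cons, Multiset.count_add]
      have h1 : (Multiset.powersetCard ((M.filter p).card + 1) M).count (a ::ₘ M.filter p) = 0 := by
        rw [Multiset.count_eq_zero]
        intro hmem
        have := (Multiset.mem_powersetCard.mp hmem).1
        have hcnt := Multiset.le_iff_count.mp this a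
        rw [Multiset.count_cons_self, Multiset.count_filter, if_pos hpa] at hcnt
        omega
      have h2 : ((Multiset.powersetCard ((M.filter p).card) M).map (a ::ₘ ·)).count
          (a ::ₘ M.filter p) = 1 := by
        have hinj : Function.Injective (a ::ₘ · : Multiset α → Multiset α) := by
          intro x y h
          have := congrArg (fun z => Multiset.erase z a) h
          simpa using this
        rw [Multiset.count_map_eq_count' _ _ hinj]
        exact ih
      rw [h1, h2]
    · rw [Multiset.filter_cons_of_neg _ hpa]
      rcases Nat.eq_zero_or_pos ((M.filter p).card) with h0 | hpos
      · rw [h0]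
        simp only [Multiset.powersetCard_zero_left]
        rw [Multiset.card_eq_zero.mp h0]
        simp
      · obtain ⟨c, hc⟩ := Nat.exists_eq_succ_of_ne_zero (Nat.pos_iff_ne_zero.mp hpos)
        rw [hc, Multiset.powersetCard_cons, Multiset.count_add]
        have h2 : ((Multiset.powersetCard c M).map (a ::ₘ ·)).count (M.filter p) = 0 := by
          rw [Multiset.count_eq_zero]
          intro hmem
          obtain ⟨S', _, hS'⟩ := Multiset.mem_map.mp hmem
          have : a ∈ M.filter p := by rw [← hS']; exact Multiset.mem_cons_self a S'
          exact hpa (Multiset.mem_filter.mp this).2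
        rw [h2, show c + 1 = (M.filter p).card from hc.symm, ih]

end CombM

lemma qsum_filter (M : Multiset ℚ) (hM : ∀ τ ∈ M, 0 ≤ τ) (c : ℚ) :
    (M.filter (fun τ => τ ≤ c)).sum
      = XF (M.toFinset.filter (fun τ => 0 < τ)) (fun τ => M.count τ) c := by
  classical
  set N := M.filter (fun τ => τ ≤ c) with hN
  have h1 : N.sum = ∑ τ ∈ N.toFinset, N.count τ • τ := Finset.sum_multiset_count N
  have h2 : N.toFinset = M.toFinset.filter (fun τ => τ ≤ c) := Multiset.toFinset_filter _ _
  have h3 : ∀ τ ∈ N.toFinset, N.count τ = M.count τ := by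
    intro τ hτ
    rw [h2, Finset.mem_filter] at hτ
    rw [hN, Multiset.count_filter, if_pos hτ.2]
  rw [h1]
  have h4 : ∑ τ ∈ N.toFinset, N.count τ • τ = ∑ τ ∈ M.toFinset.filter (fun τ => τ ≤ c),
      (M.count τ : ℚ) * τ := by
    rw [← h2]
    apply Finset.sum_congr rfl
    intro τ hτ
    rw [h3 τ hτ, nsmul_eq_mul]
  rw [h4]
  unfold XF
  rw [Finset.filter_filter]
  symm
  apply Finset.sum_subset
  · intro τ hτ
    rw [Finset.mem_filter] at hτ ⊢
    exact ⟨hτ.1, hτ.2.2⟩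
  · intro τ hτ1 hτ2
    rw [Finset.mem_filter] at hτ1
    have h5 : ¬ (0 < τ) := by
      intro h
      exact hτ2 (Finset.mem_filter.mpr ⟨hτ1.1, h, hτ1.2⟩)
    have h6 : τ = 0 := le_antisymm (not_lt.mp h5) (hM τ (Multiset.mem_toFinset.mp hτ1.1))
    rw [h6, mul_zero]

lemma qcard_filter (M : Multiset ℚ) (hM : ∀ τ ∈ M, 0 ≤ τ) (c : ℚ) (hc : 0 ≤ c) :
    Multiset.card (M.filter (fun τ => τ ≤ c))
      + YF (M.toFinset.filter (fun τ => 0 < τ)) (fun τ => M.count τ) c = Multiset.card M := by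
  classical
  have hsplit : Multiset.card (M.filter (fun τ => τ ≤ c))
      + Multiset.card (M.filter (fun τ => ¬ τ ≤ c)) = Multiset.card M := by
    rw [← Multiset.card_add, Multiset.filter_add_not]
  have h1 : YF (M.toFinset.filter (fun τ => 0 < τ)) (fun τ => M.count τ) c
      = Multiset.card (M.filter (fun τ => ¬ τ ≤ c)) := by
    unfold YF
    rw [Finset.filter_filter]
    have h2 : Multiset.card (M.filter (fun τ => ¬ τ ≤ c))
        = ∑ τ ∈ (M.filter (fun τ => ¬ τ ≤ c)).toFinset,
            (M.filter (fun τ => ¬ τ ≤ c)).count τ :=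
      (Multiset.toFinset_sum_count_eq _).symm
    rw [h2, Multiset.toFinset_filter]
    apply Finset.sum_congr
    · apply Finset.filter_congr
      intro τ hτ
      constructor
      · rintro ⟨_, h⟩
        exact not_le.mpr h
      · intro h
        have := not_le.mp h
        exact ⟨lt_of_le_of_lt hc this, this⟩
    · intro τ hτ
      rw [Finset.mem_filter] at hτ
      rw [Multiset.count_filter, if_pos hτ.2]
  rw [h1, hsplit]

/-- **Newton–Puiseux polygon formula.** Let `f` be a unitary polynomial in `z₂` over `ℂ{z₁}`
with `f(0,0) = 0`, not divisible by `z₂`, split over a field extension `L` of the fraction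
field to which the `z₁`-adic valuation extends (uniquely) as `v`. If `m_ρ` denotes the number
of roots of `f` in `L` of valuation `ρ` (with multiplicity), then
`N(f) = Σ_{ρ > 0} {m_ρ·ρ / m_ρ}`. -/
theorem newton_puiseux {L : Type*} [Field L] [Algebra (PowerSeries ℂ) L]
    (hinj : Function.Injective (algebraMap (PowerSeries ℂ) L))
    (v : L → ℚ)
    (hv_mul : ∀ x y : L, x ≠ 0 → y ≠ 0 → v (x * y) = v x + v y)
    (hv_add : ∀ x y : L, x ≠ 0 → y ≠ 0 → x + y ≠ 0 → min (v x) (v y) ≤ v (x + y))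
    (hvX : v (algebraMap (PowerSeries ℂ) L PowerSeries.X) = 1)
    (hvU : ∀ u : (PowerSeries ℂ)ˣ, v (algebraMap (PowerSeries ℂ) L (u : PowerSeries ℂ)) = 0)
    (f : Polynomial (PowerSeries ℂ)) (hmonic : f.Monic)
    (h00 : PowerSeries.constantCoeff (f.coeff 0) = 0)
    (h0 : f.coeff 0 ≠ 0)
    (hsplit : Polynomial.Splits (f.map (algebraMap (PowerSeries ℂ) L))) :
    newtonPolygon f =
      convexHull ℝ (Q2 +
        ∑ ρ ∈ ((f.map (algebraMap (PowerSeries ℂ) L)).roots.map v).toFinset.filter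
            (fun ρ => 0 < ρ),
          elemPoly
            (((((f.map (algebraMap (PowerSeries ℂ) L)).roots.map v).count ρ : ℝ)) * (ρ : ℝ))
            ((((f.map (algebraMap (PowerSeries ℂ) L)).roots.map v).count ρ : ℝ))) := by
  
  classical
  set φ := algebraMap (PowerSeries ℂ) L with hφdef
  set p := f.map φ with hpdef
  set R := p.roots with hRdef
  set n := f.natDegree with hndef
  set ρQ := R.map v with hρQdef
  set F := ρQ.toFinset.filter (fun τ => 0 < τ) with hFdef
  set m : ℚ → ℕ := fun τ => ρQ.count τ with hmdef
  -- basic polynomial facts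
  have hpm : p.Monic := hmonic.map φ
  have hpne : p ≠ 0 := hpm.ne_zero
  have hnd : p.natDegree = n := hmonic.natDegree_map φ
  have hsplit' : p.Splits := hsplit
  have hprod : p = (R.map fun a => Polynomial.X - Polynomial.C a).prod :=
    hsplit'.eq_prod_roots_of_monic hpm
  have hcardR : Multiset.card R = n := by
    rw [← hnd]
    exact hsplit'.natDegree_eq_card_roots.symm
  have hφ0 : ∀ a : PowerSeries ℂ, φ a = 0 ↔ a = 0 := fun a => map_eq_zero_iff φ hinj
  have hGcoeff : ∀ k, p.coeff k = φ (f.coeff k) := fun k => Polynomial.coeff_map φ k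
  have hcoeffE : ∀ k, k ≤ n → p.coeff k = (-1) ^ (n - k) * R.esymm (n - k) := by
    intro k hk
    conv_lhs => rw [hprod]
    rw [Multiset.prod_X_sub_C_coeff R (by rw [hcardR]; exact hk), hcardR]
  have hsign : ∀ (j : ℕ) (x : L), x ≠ 0 → v ((-1) ^ j * x) = v x := by
    intro j x hx
    rcases neg_one_pow_eq_or L j with h | h
    · rw [h, one_mul]
    · rw [h, neg_one_mul, v_neg v hv_mul x hx]
  have hsignne : ∀ (j : ℕ) (x : L), x ≠ 0 → (-1 : L) ^ j * x ≠ 0 := by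
    intro j x hx
    apply mul_ne_zero _ hx
    rcases neg_one_pow_eq_or L j with h | h <;> rw [h] <;> simp
  -- roots are nonzero
  have hR0 : ∀ α ∈ R, α ≠ 0 := by
    intro α hα hz
    have hroot : p.IsRoot α := (Polynomial.mem_roots'.mp hα).2
    have hc0 : p.coeff 0 = 0 := by
      rw [Polynomial.coeff_zero_eq_eval_zero]
      rw [hz] at hroot
      exact hroot
    rw [hGcoeff 0] at hc0
    exact h0 ((hφ0 _).mp hc0)
  -- valuation of the image of a power series is its order
  have hvφ : ∀ (a : PowerSeries ℂ) (ha : a ≠ 0),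
      v (φ a) = ((a.order.lift (PowerSeries.order_finite_iff_ne_zero.mpr ha)) : ℚ) := by
    intro a ha
    have hfac : a = PowerSeries.X ^ (a.order.lift (PowerSeries.order_finite_iff_ne_zero.mpr ha)) * PowerSeries.divXPowOrder a := by
        rw [ENat.lift_eq_toNat_of_lt_top]; exact PowerSeries.X_pow_order_mul_divXPowOrder.symm
    obtain ⟨u, hu⟩ : ∃ u : (PowerSeries ℂ)ˣ,
        (u : PowerSeries ℂ) = PowerSeries.divXPowOrder a :=
      PowerSeries.isUnit_divided_by_X_pow_order ha
    have hd0 : PowerSeries.divXPowOrder a ≠ 0 := by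
      rw [← hu]; exact Units.ne_zero u
    have hX0 : (PowerSeries.X : PowerSeries ℂ) ≠ 0 := PowerSeries.X_ne_zero
    have hφX : φ PowerSeries.X ≠ 0 := fun h => hX0 ((hφ0 _).mp h)
    have hφd : φ (PowerSeries.divXPowOrder a) ≠ 0 := fun h => hd0 ((hφ0 _).mp h)
    have hvd : v (φ (PowerSeries.divXPowOrder a)) = 0 := by
      rw [← hu]; exact hvU _
    set o := a.order.lift (PowerSeries.order_finite_iff_ne_zero.mpr ha) with ho
    calc v (φ a)
        = v (φ (PowerSeries.X ^ o * PowerSeries.divXPowOrder a)) := by rw [← hfac]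
    _ = v (φ PowerSeries.X ^ o * φ (PowerSeries.divXPowOrder a)) := by
        rw [map_mul, map_pow]
    _ = v (φ PowerSeries.X ^ o) + v (φ (PowerSeries.divXPowOrder a)) :=
        hv_mul _ _ (pow_ne_zero _ hφX) hφd
    _ = (o : ℚ) * v (φ PowerSeries.X) + v (φ (PowerSeries.divXPowOrder a)) := by
        rw [v_pow v hv_mul _ hφX o]
    _ = (o : ℚ) := by rw [hvX, hvd]; ring
  have hvφ0 : ∀ a : PowerSeries ℂ, a ≠ 0 → 0 ≤ v (φ a) := by
    intro a ha
    rw [hvφ a ha]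
    exact Nat.cast_nonneg _
  -- roots have nonnegative valuation
  have hv0 : ∀ α ∈ R, 0 ≤ v α := by
    intro α hα
    by_contra hneg
    push_neg at hneg
    have hα0 : α ≠ 0 := hR0 α hα
    have hroot : p.eval α = 0 := (Polynomial.mem_roots'.mp hα).2
    have heval : p.eval α = ∑ i ∈ Finset.range (n + 1), p.coeff i * α ^ i := by
      rw [← hnd]; exact Polynomial.eval_eq_sum_range α
    rw [Finset.sum_range_succ] at heval
    have hlead : p.coeff n = 1 := by rw [← hnd]; exact hpm.coeff_natDegree
    rw [hlead, one_mul, hroot] at heval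
    set Mlt := (Finset.range n).val.map (fun i => p.coeff i * α ^ i) with hMlt
    have hterm : ∀ x ∈ Mlt, x = 0 ∨ (x ≠ 0 ∧ (n : ℚ) * v α < v x) := by
      intro x hx
      obtain ⟨i, hi, rfl⟩ := Multiset.mem_map.mp hx
      have hin : i < n := Finset.mem_range.mp hi
      by_cases hci : p.coeff i = 0
      · left; rw [hci, zero_mul]
      · right
        refine ⟨mul_ne_zero hci (pow_ne_zero _ hα0), ?_⟩
        have h1 : v (p.coeff i * α ^ i) = v (p.coeff i) + (i : ℚ) * v α := by
          rw [hv_mul _ _ hci (pow_ne_zero _ hα0), v_pow v hv_mul _ hα0]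
        have h2 : 0 ≤ v (p.coeff i) := by
          have hfi : f.coeff i ≠ 0 := fun h => hci (by rw [hGcoeff, h, map_zero])
          rw [hGcoeff i]
          exact hvφ0 _ hfi
        have h3 : (i : ℚ) ≤ (n : ℚ) - 1 := by
          have : (i : ℚ) + 1 ≤ (n : ℚ) := by exact_mod_cast hin
          linarith
        rw [h1]
        nlinarith [hneg, h2, h3]
    have hsum := v_sum_lt v hv_mul hv_add Mlt ((n : ℚ) * v α) hterm
    have hMsum : Mlt.sum = ∑ i ∈ Finset.range n, p.coeff i * α ^ i := rfl
    have hML : Mlt.sum = - α ^ n := by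
      rw [hMsum]; linear_combination -heval
    have hvan : v (- α ^ n) = (n : ℚ) * v α := by
      rw [v_neg v hv_mul _ (pow_ne_zero n hα0), v_pow v hv_mul _ hα0]
    rcases hsum with hz | ⟨_, hvlt⟩
    · rw [hML] at hz
      exact (pow_ne_zero n hα0) (neg_eq_zero.mp hz)
    · rw [hML, hvan] at hvlt
      exact lt_irrefl _ hvlt
  -- dictionary facts
  have hρQ0 : ∀ τ ∈ ρQ, 0 ≤ τ := by
    intro τ hτ
    obtain ⟨α, hα, rfl⟩ := Multiset.mem_map.mp hτ
    exact hv0 α hα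
  have hFpos : ∀ τ ∈ F, 0 < τ := fun τ hτ => (Finset.mem_filter.mp hτ).2
  have hcardρQ : Multiset.card ρQ = n := by rw [hρQdef, Multiset.card_map, hcardR]
  have hcfilter : ∀ c : ℚ, 0 ≤ c →
      Multiset.card (ρQ.filter (fun τ => τ ≤ c)) + YF F m c = n := by
    intro c hc
    rw [← hcardρQ]
    exact qcard_filter ρQ hρQ0 c hc
  have hsfilter : ∀ c : ℚ, (ρQ.filter (fun τ => τ ≤ c)).sum = XF F m c := by
    intro c
    exact qsum_filter ρQ hρQ0 c
  have hfm : ∀ c : ℚ, ρQ.filter (fun τ => τ ≤ c) = (R.filter (fun α => v α ≤ c)).map v := by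
    intro c
    rw [hρQdef, Multiset.filter_map]
    rfl
  -- Claim A : lower bound for every coefficient
  have claimA : ∀ k : ℕ, k ≤ n → f.coeff k ≠ 0 → ∀ c : ℚ, 0 ≤ c →
      XF F m c + ((YF F m c : ℚ) - (k : ℚ)) * c ≤ v (φ (f.coeff k)) := by
    intro k hkn hfk c hc
    set c0 := XF F m c + ((YF F m c : ℚ) - (k : ℚ)) * c with hc0
    have hsR : ((R.filter (fun a => v a ≤ c)).map v).sum = XF F m c := by
      rw [← hfm, hsfilter]
    have hY : (Multiset.card (R.filter (fun a => v a ≤ c)) : ℚ)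
        = (n : ℚ) - (YF F m c : ℚ) := by
      have h1 : Multiset.card (R.filter (fun a => v a ≤ c))
          = Multiset.card (ρQ.filter (fun τ => τ ≤ c)) := by
        rw [hfm, Multiset.card_map]
      have h2 := congrArg (Nat.cast : ℕ → ℚ) (hcfilter c hc)
      push_cast at h2
      rw [h1]
      linarith
    have hterm : ∀ x ∈ (R.powersetCard (n - k)).map Multiset.prod,
        x = 0 ∨ (x ≠ 0 ∧ c0 ≤ v x) := by
      intro x hx
      obtain ⟨S, hS, rfl⟩ := Multiset.mem_map.mp hx
      obtain ⟨hSle, hScard⟩ := Multiset.mem_powersetCard.mp hS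
      have hSne : ∀ y ∈ S, y ≠ 0 := fun y hy => hR0 y (Multiset.mem_of_le hSle hy)
      obtain ⟨hprod0, hprodv⟩ := v_prod v hv_mul S hSne
      right
      refine ⟨hprod0, ?_⟩
      rw [hprodv]
      have hL1 := sum_filter_le_sum v c R S hSle
      have hcS : (Multiset.card S : ℚ) = (n : ℚ) - (k : ℚ) := by
        rw [hScard]
        push_cast [Nat.cast_sub hkn]
        ring
      rw [hsR, hcS, hY] at hL1
      rw [hc0]
      calc XF F m c + ((YF F m c : ℚ) - (k : ℚ)) * c
          = XF F m c + (((n : ℚ) - (k : ℚ)) - ((n : ℚ) - (YF F m c : ℚ))) * c := by ring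
      _ ≤ (S.map v).sum := hL1
    have hvsum := v_sum_le v hv_add ((R.powersetCard (n - k)).map Multiset.prod) c0 hterm
    have hEs : φ (f.coeff k) = (-1) ^ (n - k) * R.esymm (n - k) := by
      rw [← hGcoeff, hcoeffE k hkn]
    have hne : φ (f.coeff k) ≠ 0 := fun h => hfk ((hφ0 _).mp h)
    have hes_ne : R.esymm (n - k) ≠ 0 := by
      intro h
      rw [hEs, h, mul_zero] at hne
      exact hne rfl
    have hesymm_def : R.esymm (n - k) = ((R.powersetCard (n - k)).map Multiset.prod).sum := rfl
    rcases hvsum with hz | ⟨_, hvge⟩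
    · exact absurd (hesymm_def.trans hz) hes_ne
    · rw [hEs, hsign _ _ hes_ne, hesymm_def]
      exact hvge
  -- Claim B : equality at the threshold coefficients
  have claimB : ∀ c : ℚ, 0 ≤ c →
      f.coeff (YF F m c) ≠ 0 ∧ v (φ (f.coeff (YF F m c))) = XF F m c := by
    intro c hc
    set k := YF F m c with hkdef
    have hkn : k ≤ n := by
      have := hcfilter c hc
      omega
    set S0 := R.filter (fun α => v α ≤ c) with hS0def
    have hcS0 : Multiset.card S0 = n - k := by
      have h1 : Multiset.card S0 = Multiset.card (ρQ.filter (fun τ => τ ≤ c)) := by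
        rw [hS0def, hfm, Multiset.card_map]
      have := hcfilter c hc
      omega
    have hmem : S0 ∈ R.powersetCard (Multiset.card S0) :=
      Multiset.mem_powersetCard.mpr ⟨Multiset.filter_le _ _, rfl⟩
    have hcount := count_powersetCard_filter (fun α => v α ≤ c) R
    obtain ⟨Rest, hRest⟩ := Multiset.exists_cons_of_mem hmem
    have hnotin : S0 ∉ Rest := by
      intro hmem2
      have h1 : (R.powersetCard (Multiset.card S0)).count S0 = 1 := by
        rw [hS0def]
        exact hcount
      rw [hRest, Multiset.count_cons_self] at h1
      have := Multiset.count_pos.mpr hmem2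
      omega
    have hS0ne : ∀ y ∈ S0, y ≠ 0 := fun y hy =>
      hR0 y (Multiset.mem_of_le (Multiset.filter_le _ _) hy)
    obtain ⟨hp0', hpv⟩ := v_prod v hv_mul S0 hS0ne
    have hvS0 : v S0.prod = XF F m c := by
      rw [hpv, hS0def, ← hfm, hsfilter]
    have hstrict : ∀ y ∈ Rest.map Multiset.prod, y = 0 ∨ (y ≠ 0 ∧ v S0.prod < v y) := by
      intro y hy
      obtain ⟨S, hSR, rfl⟩ := Multiset.mem_map.mp hy
      have hSpow : S ∈ R.powersetCard (Multiset.card S0) := by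
        rw [hRest]; exact Multiset.mem_cons_of_mem hSR
      obtain ⟨hSle, hScard⟩ := Multiset.mem_powersetCard.mp hSpow
      have hSne : S ≠ S0 := fun h => hnotin (h ▸ hSR)
      have hyne : ∀ z ∈ S, z ≠ 0 := fun z hz => hR0 z (Multiset.mem_of_le hSle hz)
      obtain ⟨hy0, hyv⟩ := v_prod v hv_mul S hyne
      right
      refine ⟨hy0, ?_⟩
      rw [hyv, hvS0]
      have hlt := sum_filter_lt_sum v c R S hSle (by rw [hScard, hS0def]) (by rw [hS0def] at hSne; exact hSne)
      calc XF F m c = ((R.filter (fun a => v a ≤ c)).map v).sum := by rw [← hfm, hsfilter]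
      _ < (S.map v).sum := hlt
    have hkey := v_sum_strict v hv_mul hv_add S0.prod (Rest.map Multiset.prod) hp0' hstrict
    have hms : (R.powersetCard (Multiset.card S0)).map Multiset.prod
        = S0.prod ::ₘ Rest.map Multiset.prod := by
      rw [hRest, Multiset.map_cons]
    have hesum : R.esymm (n - k) = (S0.prod ::ₘ Rest.map Multiset.prod).sum := by
      rw [show R.esymm (n - k) = ((R.powersetCard (n - k)).map Multiset.prod).sum from rfl,
        ← hcS0, hms]
    have hEs : φ (f.coeff k) = (-1) ^ (n - k) * R.esymm (n - k) := by
      rw [← hGcoeff, hcoeffE k hkn]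
    have hesne : R.esymm (n - k) ≠ 0 := by
      rw [hesum]; exact hkey.1
    constructor
    · intro hzero
      have : φ (f.coeff k) = 0 := by rw [hzero, map_zero]
      rw [hEs] at this
      exact hsignne _ _ hesne this
    · rw [hEs, hsign _ _ hesne, hesum, hkey.2, hvS0]
  -- the three polygon descriptions
  set Gen : Set (ℝ × ℝ) := (fun q : ℕ × ℕ => ((q.1 : ℝ), (q.2 : ℝ))) ''
    {q : ℕ × ℕ | PowerSeries.coeff q.1 (f.coeff q.2) ≠ 0} with hGendef
  set Mid : Set (ℝ × ℝ) := MidSet F m with hMiddef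
  set SP : ℚ → Set (ℝ × ℝ) := fun τ =>
    ({((0 : ℝ), ((m τ : ℝ))), (((m τ : ℝ)) * (τ : ℝ), (0 : ℝ))} : Set (ℝ × ℝ)) with hSPdef
  set PairPts : Set (ℝ × ℝ) := ∑ τ ∈ F, SP τ with hPPdef
  -- step 1 : newtonPolygon f = NP Gen
  have step1 : newtonPolygon f = NP Gen := by
    unfold newtonPolygon NP
    congr 1
    ext x
    constructor
    · intro hx
      simp only [Set.mem_iUnion] at hx
      obtain ⟨q, hq, hxq⟩ := hx
      rw [Set.singleton_add] at hxq
      obtain ⟨u, hu, hux⟩ := hxq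
      exact ⟨((q.1 : ℝ), (q.2 : ℝ)), ⟨q, hq, rfl⟩, u, hu, hux⟩
    · rintro ⟨g, ⟨q, hq, rfl⟩, u, hu, rfl⟩
      simp only [Set.mem_iUnion]
      exact ⟨q, hq, Set.add_mem_add rfl hu⟩
  -- step 2 : RHS = NP PairPts
  have step2 : convexHull ℝ (Q2 + ∑ τ ∈ F, elemPoly ((m τ : ℝ) * (τ : ℝ)) (m τ : ℝ))
      = NP PairPts := by
    have helem : ∀ τ : ℚ, elemPoly ((m τ : ℝ) * (τ : ℝ)) (m τ : ℝ) = NP (SP τ) := by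
      intro τ
      unfold elemPoly NP
      congr 1
      rw [hSPdef]
      simp only
      rw [Set.insert_eq, Set.union_add]
    rw [Finset.sum_congr rfl (fun τ _ => helem τ), Q2_add_sum_NP F SP, ← hPPdef]
    exact (NP_convex _).convexHull_eq
  -- step 3 : Gen ⊆ NP Mid
  have step3 : Gen ⊆ NP Mid := by
    rintro _ ⟨⟨a, b⟩, hab, rfl⟩
    simp only [Set.mem_setOf_eq] at hab
    have hfb : f.coeff b ≠ 0 := by
      intro h
      rw [h] at hab
      simp at hab
    have hbn : b ≤ n := by
      by_contra h
      push_neg at h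
      exact hfb (Polynomial.coeff_eq_zero_of_natDegree_lt (by rw [← hndef]; exact h))
    have hfin := PowerSeries.order_finite_iff_ne_zero.mpr hfb
    have hord : (f.coeff b).order ≤ (a : ℕ∞) := PowerSeries.order_le a hab
    have hoa : (f.coeff b).order.lift hfin ≤ a := by
      have hcl : (((f.coeff b).order.lift hfin : ℕ) : ℕ∞) = (f.coeff b).order :=
        ENat.coe_lift _ _
      rw [← hcl] at hord
      exact_mod_cast hord
    have hva : v (φ (f.coeff b)) = (((f.coeff b).order.lift hfin : ℕ) : ℚ) := hvφ _ hfb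
    apply mem_NP_Mid F m hFpos
    intro c hc
    have h1 := claimA b hbn hfb c hc
    rw [hva] at h1
    have h2 : ((f.coeff b).order.lift hfin : ℚ) ≤ (a : ℚ) := by exact_mod_cast hoa
    have h3 : XF F m c + ((YF F m c : ℚ) - (b : ℚ)) * c ≤ (a : ℚ) := le_trans h1 h2
    have h4 := (Rat.cast_le (K := ℝ)).mpr h3
    push_cast at h4 ⊢
    convert h4 using 2 <;> norm_num
  -- step 4 : Mid ⊆ Gen
  have step4 : Mid ⊆ Gen := by
    rintro _ ⟨c, hc, rfl⟩
    obtain ⟨hfk, hvk⟩ := claimB c hc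
    have hfin := PowerSeries.order_finite_iff_ne_zero.mpr hfk
    have hva : v (φ (f.coeff (YF F m c)))
        = (((f.coeff (YF F m c)).order.lift hfin : ℕ) : ℚ) := hvφ _ hfk
    have hoXF : (((f.coeff (YF F m c)).order.lift hfin : ℕ) : ℚ) = XF F m c := by
      rw [← hva, hvk]
    refine ⟨((f.coeff (YF F m c)).order.lift hfin, YF F m c), ?_, ?_⟩
    · rw [ENat.lift_eq_toNat_of_lt_top]; exact PowerSeries.coeff_order hfk
    · simp only
      have : (((f.coeff (YF F m c)).order.lift hfin : ℕ) : ℝ) = ((XF F m c : ℚ) : ℝ) := by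
        exact_mod_cast congrArg (Rat.cast : ℚ → ℝ) hoXF
      rw [this]
  -- step 5 : PairPts ⊆ NP Mid
  have step5 : PairPts ⊆ NP Mid := by
    intro q hq
    rw [hPPdef] at hq
    obtain ⟨g, hg, rfl⟩ := mem_finsetSum F SP q hq
    set B := F.filter (fun τ => g τ = (((m τ : ℝ)) * (τ : ℝ), (0 : ℝ))) with hBdef
    have hBF : B ⊆ F := Finset.filter_subset _ _
    have hgB : ∀ τ ∈ B, g τ = ((m τ : ℝ) * (τ : ℝ), (0 : ℝ)) :=
      fun τ hτ => (Finset.mem_filter.mp hτ).2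
    have hgNB : ∀ τ ∈ F \ B, g τ = ((0 : ℝ), (m τ : ℝ)) := by
      intro τ hτ
      obtain ⟨hτF, hτB⟩ := Finset.mem_sdiff.mp hτ
      have := hg τ hτF
      rw [hSPdef] at this
      simp only [Set.mem_insert_iff, Set.mem_singleton_iff] at this
      rcases this with h | h
      · exact h
      · exact absurd (Finset.mem_filter.mpr ⟨hτF, h⟩) hτB
    have hfst : (∑ τ ∈ F, g τ).1 = ∑ τ ∈ B, (m τ : ℝ) * (τ : ℝ) := by
      rw [Prod.fst_sum, ← Finset.sum_sdiff hBF]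
      have h1 : ∑ τ ∈ F \ B, (g τ).1 = 0 := by
        apply Finset.sum_eq_zero
        intro τ hτ
        rw [hgNB τ hτ]
      have h2 : ∑ τ ∈ B, (g τ).1 = ∑ τ ∈ B, (m τ : ℝ) * (τ : ℝ) := by
        apply Finset.sum_congr rfl
        intro τ hτ
        rw [hgB τ hτ]
      rw [h1, h2, zero_add]
    have hsnd : (∑ τ ∈ F, g τ).2 = ((∑ τ ∈ F \ B, m τ : ℕ) : ℝ) := by
      rw [Prod.snd_sum, ← Finset.sum_sdiff hBF]
      have h1 : ∑ τ ∈ B, (g τ).2 = 0 := by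
        apply Finset.sum_eq_zero
        intro τ hτ
        rw [hgB τ hτ]
      have h2 : ∑ τ ∈ F \ B, (g τ).2 = ∑ τ ∈ F \ B, (m τ : ℝ) := by
        apply Finset.sum_congr rfl
        intro τ hτ
        rw [hgNB τ hτ]
      rw [h1, h2, add_zero, Nat.cast_sum]
    have hpt : (∑ τ ∈ F, g τ)
        = ((∑ τ ∈ B, (m τ : ℝ) * (τ : ℝ)), ((∑ τ ∈ F \ B, m τ : ℕ) : ℝ)) :=
      Prod.ext hfst hsnd
    rw [hpt]
    apply mem_NP_Mid F m hFpos
    intro c hc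
    have h1 := finset_L1 F m hFpos B hBF c hc
    have h2 := (Rat.cast_le (K := ℝ)).mpr h1
    push_cast at h2 ⊢
    convert h2 using 2 <;> norm_num
  -- step 6 : Mid ⊆ PairPts
  have step6 : Mid ⊆ PairPts := by
    rintro _ ⟨c, hc, rfl⟩
    have hmem := finsetSum_mem F SP
      (fun τ => if τ ≤ c then (((m τ : ℝ)) * (τ : ℝ), (0 : ℝ)) else ((0 : ℝ), (m τ : ℝ)))
      (by
        intro τ hτ
        split_ifs
        · exact Set.mem_insert_iff.mpr (Or.inr rfl)
        · exact Set.mem_insert_iff.mpr (Or.inl rfl))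
    have hpt : (∑ τ ∈ F,
        (if τ ≤ c then (((m τ : ℝ)) * (τ : ℝ), (0 : ℝ)) else ((0 : ℝ), (m τ : ℝ))))
        = (((XF F m c : ℚ) : ℝ), ((YF F m c : ℕ) : ℝ)) := by
      apply Prod.ext
      · rw [Prod.fst_sum]
        have h1 : ∀ τ ∈ F, ((if τ ≤ c then (((m τ : ℝ)) * (τ : ℝ), (0 : ℝ))
            else ((0 : ℝ), (m τ : ℝ))) : ℝ × ℝ).1
            = if τ ≤ c then (m τ : ℝ) * (τ : ℝ) else 0 := by
          intro τ _
          split_ifs <;> rfl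
        rw [Finset.sum_congr rfl h1, ← Finset.sum_filter]
        unfold XF
        push_cast
        rfl
      · rw [Prod.snd_sum]
        have h1 : ∀ τ ∈ F, ((if τ ≤ c then (((m τ : ℝ)) * (τ : ℝ), (0 : ℝ))
            else ((0 : ℝ), (m τ : ℝ))) : ℝ × ℝ).2
            = if ¬ τ ≤ c then (m τ : ℝ) else 0 := by
          intro τ _
          split_ifs <;> first | rfl | (exfalso; tauto)
        rw [Finset.sum_congr rfl h1, ← Finset.sum_filter]
        unfold YF
        have h2 : F.filter (fun τ => ¬ τ ≤ c) = F.filter (fun τ => c < τ) := by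
          apply Finset.filter_congr
          intro τ _
          simp [not_le]
        rw [h2]
        push_cast
        rfl
    rw [hPPdef]
    simp only
    rw [← hpt]
    exact hmem
  have hGenMid : NP Gen = NP Mid :=
    subset_antisymm (NP_subset_of_subset step3) (NP_mono step4)
  have hPairMid : NP PairPts = NP Mid :=
    subset_antisymm (NP_subset_of_subset step5) (NP_mono step6)
  calc newtonPolygon f = NP Gen := step1
  _ = NP Mid := hGenMid
  _ = NP PairPts := hPairMid.symm
  _ = convexHull ℝ (Q2 + ∑ τ ∈ F, elemPoly ((m τ : ℝ) * (τ : ℝ)) (m τ : ℝ)) := step2.symm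
end

section
/- There exists a Newton polyhedron of finite volume in ℝ≥0^d for some d ≥ 3 that is not a sum of elementary polyhedra, where an elementary polyhedron has at most one compact (d−1)-dimensional face and its noncompact (d−1)-faces lie in coordinate hyperplanes. -/
open Pointwise MeasureTheory

/-- The positive quadrant `ℝ≥0^d`. -/
def Qk (d : ℕ) : Set (Fin d → ℝ) := {x | ∀ i, 0 ≤ x i}

/-- A Newton polyhedron: a closed convex subset of `ℝ≥0^d` stable under adding the quadrant. -/
def IsNewtonPolyhedron {d : ℕ} (N : Set (Fin d → ℝ)) : Prop :=
  IsClosed N ∧ Convex ℝ N ∧ N ⊆ Qk d ∧ N + Qk d = N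

/-- An elementary Newton polyhedron: the standard simplex up to affinity, i.e. the part of
the quadrant above a hyperplane with positive coefficients; it has at most one compact
`(d-1)`-dimensional face, and its noncompact facets lie in coordinate hyperplanes. -/
def IsElementaryPolyhedron {d : ℕ} (E : Set (Fin d → ℝ)) : Prop :=
  ∃ c : Fin d → ℝ, (∀ i, 0 < c i) ∧ ∃ r : ℝ, 0 ≤ r ∧
    E = {x ∈ Qk d | r ≤ ∑ i, c i * x i}

namespace NPAux

noncomputable section

/-- explicit dot product on `Fin 3 → ℝ` -/
def dot (v x : Fin 3 → ℝ) : ℝ := v 0 * x 0 + v 1 * x 1 + v 2 * x 2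

lemma dot_add (v x y : Fin 3 → ℝ) : dot v (x + y) = dot v x + dot v y := by
  simp [dot]; ring

lemma dot_zero (v : Fin 3 → ℝ) : dot v 0 = 0 := by simp [dot]

lemma isLinearMap_dot (v : Fin 3 → ℝ) : IsLinearMap ℝ (dot v) := by
  constructor
  · exact dot_add v
  · intro t x; simp [dot, smul_eq_mul]; ring

lemma dot_sum (v : Fin 3 → ℝ) {n : ℕ} (f : Fin n → (Fin 3 → ℝ)) :
    dot v (∑ i, f i) = ∑ i, dot v (f i) := by
  simp [dot, Finset.sum_apply, Finset.mul_sum, ← Finset.sum_add_distrib]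

lemma dot_nonneg (v x : Fin 3 → ℝ) (hv : ∀ i, 0 ≤ v i) (hx : x ∈ Qk 3) :
    0 ≤ dot v x := by
  have := hx 0; have := hx 1; have := hx 2
  have := hv 0; have := hv 1; have := hv 2
  unfold dot; positivity

def min3 (a b c : ℝ) : ℝ := min a (min b c)

lemma key_min (c0 c1 c2 : ℝ) (h0 : 0 < c0) (h1 : 0 < c1) (h2 : 0 < c2) :
    min3 (1/c0) (2/c1) (1/c2) + min3 (2/c0) (1/c1) (1/c2) ≤
      min3 (1/c0) (1/c1) (1/c2) + min3 (2/c0) (2/c1) (1/c2) := by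
  have hA : (0:ℝ) ≤ 1/c0 := by positivity
  have hB : (0:ℝ) ≤ 1/c1 := by positivity
  have hA2 : (1:ℝ)/c0 ≤ 2/c0 := by
    apply div_le_div_of_nonneg_right (by norm_num) h0.le
  have hB2 : (1:ℝ)/c1 ≤ 2/c1 := by
    apply div_le_div_of_nonneg_right (by norm_num) h1.le
  set A1 := (1:ℝ)/c0; set A2 := (2:ℝ)/c0
  set B1 := (1:ℝ)/c1; set B2 := (2:ℝ)/c1
  set C := (1:ℝ)/c2
  have hM1 : min3 A1 B2 C ≤ min3 A2 B2 C := by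
    unfold min3
    exact min_le_min hA2 le_rfl
  have hM2 : min3 A2 B1 C ≤ min3 A2 B2 C := by
    unfold min3
    exact min_le_min le_rfl (min_le_min hB2 le_rfl)
  have hmm : min (min3 A1 B2 C) (min3 A2 B1 C) ≤ min3 A1 B1 C := by
    unfold min3
    refine le_min ?_ (le_min ?_ ?_)
    · exact (min_le_left _ _).trans (min_le_left _ _)
    · exact (min_le_right _ _).trans ((min_le_right _ _).trans (min_le_left _ _))
    · exact (min_le_left _ _).trans ((min_le_right _ _).trans (min_le_right _ _))
  rcases le_total (min3 A1 B2 C) (min3 A2 B1 C) with h | h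
  · rw [min_eq_left h] at hmm; linarith
  · rw [min_eq_right h] at hmm; linarith

lemma elem_lb (c : Fin 3 → ℝ) (hc : ∀ i, 0 < c i) (r : ℝ) (hr : 0 ≤ r)
    (v : Fin 3 → ℝ) (hv : ∀ i, 0 ≤ v i) :
    ∀ x ∈ {x ∈ Qk 3 | r ≤ ∑ i, c i * x i},
      r * min3 (v 0 / c 0) (v 1 / c 1) (v 2 / c 2) ≤ dot v x := by
  rintro x ⟨hxQ, hxr⟩
  set μ := min3 (v 0 / c 0) (v 1 / c 1) (v 2 / c 2) with hμ
  have hμ0 : 0 ≤ μ := le_min (div_nonneg (hv 0) (hc 0).le)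
    (le_min (div_nonneg (hv 1) (hc 1).le) (div_nonneg (hv 2) (hc 2).le))
  have h0 : μ * c 0 ≤ v 0 := by
    rw [← le_div_iff₀ (hc 0)]; exact min_le_left _ _
  have h1 : μ * c 1 ≤ v 1 := by
    rw [← le_div_iff₀ (hc 1)]
    exact (min_le_right _ _).trans (min_le_left _ _)
  have h2 : μ * c 2 ≤ v 2 := by
    rw [← le_div_iff₀ (hc 2)]
    exact (min_le_right _ _).trans (min_le_right _ _)
  have hsum : r ≤ c 0 * x 0 + c 1 * x 1 + c 2 * x 2 := by
    rw [Fin.sum_univ_three] at hxr; exact hxr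
  have hx0 := hxQ 0; have hx1 := hxQ 1; have hx2 := hxQ 2
  unfold dot
  nlinarith [mul_le_mul_of_nonneg_right h0 hx0, mul_le_mul_of_nonneg_right h1 hx1,
    mul_le_mul_of_nonneg_right h2 hx2, mul_le_mul_of_nonneg_left hsum hμ0]

lemma elem_attain (c : Fin 3 → ℝ) (hc : ∀ i, 0 < c i) (r : ℝ) (hr : 0 ≤ r)
    (v : Fin 3 → ℝ) :
    ∃ x ∈ {x ∈ Qk 3 | r ≤ ∑ i, c i * x i},
      dot v x = r * min3 (v 0 / c 0) (v 1 / c 1) (v 2 / c 2) := by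
  have key : ∀ j : Fin 3, min3 (v 0 / c 0) (v 1 / c 1) (v 2 / c 2) = v j / c j →
      ∃ x ∈ {x ∈ Qk 3 | r ≤ ∑ i, c i * x i},
        dot v x = r * min3 (v 0 / c 0) (v 1 / c 1) (v 2 / c 2) := by
    intro j hj
    refine ⟨fun k => if k = j then r / c j else 0, ⟨?_, ?_⟩, ?_⟩
    · intro i
      by_cases h : i = j <;> simp [h, div_nonneg hr (hc j).le]
    · rw [Fin.sum_univ_three]
      fin_cases j <;>
        simp [Fin.ext_iff] <;>
        rw [mul_div_cancel₀ _ (by exact (hc _).ne')]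
    · rw [hj]
      unfold dot
      fin_cases j <;> simp [Fin.ext_iff] <;> ring
  unfold min3
  rcases le_total (v 1 / c 1) (v 2 / c 2) with h12 | h12
  · rcases le_total (v 0 / c 0) (v 1 / c 1) with h01 | h01
    · exact key 0 (by unfold min3; rw [min_eq_left h12, min_eq_left h01])
    · exact key 1 (by unfold min3; rw [min_eq_left h12, min_eq_right h01])
  · rcases le_total (v 0 / c 0) (v 2 / c 2) with h02 | h02
    · exact key 0 (by unfold min3; rw [min_eq_right h12, min_eq_left h02])
    · exact key 2 (by unfold min3; rw [min_eq_right h12, min_eq_right h02])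

lemma sum_lb {n : ℕ} (E : Fin n → Set (Fin 3 → ℝ)) (g : Fin n → ℝ) (v : Fin 3 → ℝ)
    (h : ∀ i, ∀ x ∈ E i, g i ≤ dot v x) :
    ∀ x ∈ ∑ i, E i, (∑ i, g i) ≤ dot v x := by
  intro x hx
  rw [Set.mem_fintype_sum] at hx
  obtain ⟨f, hf, rfl⟩ := hx
  rw [dot_sum]
  exact Finset.sum_le_sum fun i _ => h i (f i) (hf i)

lemma comb4 (S : Set (Fin 3 → ℝ)) (p0 p1 p2 p3 : Fin 3 → ℝ)
    (h0 : p0 ∈ S) (h1 : p1 ∈ S) (h2 : p2 ∈ S) (h3 : p3 ∈ S)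
    (t0 t1 t2 t3 : ℝ) (ht0 : 0 ≤ t0) (ht1 : 0 ≤ t1) (ht2 : 0 ≤ t2) (ht3 : 0 ≤ t3)
    (hsum : t0 + t1 + t2 + t3 = 1) :
    t0 • p0 + t1 • p1 + t2 • p2 + t3 • p3 ∈ convexHull ℝ S := by
  have := (convex_convexHull ℝ S).sum_mem (t := Finset.univ (α := Fin 4))
    (w := ![t0, t1, t2, t3]) (z := ![p0, p1, p2, p3])
    (fun i _ => by fin_cases i <;> assumption)
    (by rw [Fin.sum_univ_four]; simpa using hsum)
    (fun i _ => by fin_cases i <;> exact subset_convexHull ℝ S (by assumption))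
  rwa [Fin.sum_univ_four] at this
  
def pv : Fin 3 → ℝ := ![1, 2, 1]
def qv : Fin 3 → ℝ := ![2, 1, 1]

def Nset : Set (Fin 3 → ℝ) := {x | x ∈ Qk 3 ∧ 3 ≤ dot pv x ∧ 3 ≤ dot qv x}

lemma dot_pv (x : Fin 3 → ℝ) : dot pv x = x 0 + 2 * x 1 + x 2 := by
  simp [dot, pv]
lemma dot_qv (x : Fin 3 → ℝ) : dot qv x = 2 * x 0 + x 1 + x 2 := by
  simp [dot, qv]

lemma convex_Qk : Convex ℝ (Qk 3) := by
  intro x hx y hy a b ha hb hab i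
  have := hx i; have := hy i
  simp only [Pi.add_apply, Pi.smul_apply, smul_eq_mul]
  positivity

lemma closed_Qk : IsClosed (Qk 3) := by
  have : Qk 3 = ⋂ i, {x : Fin 3 → ℝ | 0 ≤ x i} := by
    ext x; simp [Qk]
  rw [this]
  exact isClosed_iInter fun i => isClosed_le continuous_const (continuous_apply i)

lemma continuous_dot (v : Fin 3 → ℝ) : Continuous (dot v) := by
  unfold dot
  fun_prop

lemma newton_Nset : IsClosed Nset ∧ Convex ℝ Nset ∧ Nset ⊆ Qk 3 ∧ Nset + Qk 3 = Nset := by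
  refine ⟨?_, ?_, ?_, ?_⟩
  · have : Nset = Qk 3 ∩ ({x | 3 ≤ dot pv x} ∩ {x | 3 ≤ dot qv x}) := by
      ext x; exact ⟨fun h => ⟨h.1, h.2.1, h.2.2⟩, fun h => ⟨h.1, h.2.1, h.2.2⟩⟩
    rw [this]
    exact closed_Qk.inter ((isClosed_le continuous_const (continuous_dot pv)).inter
      (isClosed_le continuous_const (continuous_dot qv)))
  · have : Nset = Qk 3 ∩ ({x | 3 ≤ dot pv x} ∩ {x | 3 ≤ dot qv x}) := by
      ext x; exact ⟨fun h => ⟨h.1, h.2.1, h.2.2⟩, fun h => ⟨h.1, h.2.1, h.2.2⟩⟩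
    rw [this]
    exact convex_Qk.inter ((convex_halfSpace_ge (isLinearMap_dot pv) 3).inter
      (convex_halfSpace_ge (isLinearMap_dot qv) 3))
  · exact fun x hx => hx.1
  · apply Set.Subset.antisymm
    · rintro z hz
      rw [Set.mem_add] at hz
      obtain ⟨x, hx, y, hy, rfl⟩ := hz
      refine ⟨fun i => add_nonneg (hx.1 i) (hy i), ?_, ?_⟩
      · rw [dot_add]
        have := dot_nonneg pv y (by intro i; fin_cases i <;> norm_num [pv]) hy
        linarith [hx.2.1]
      · rw [dot_add]
        have := dot_nonneg qv y (by intro i; fin_cases i <;> norm_num [qv]) hy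
        linarith [hx.2.2]
    · intro x hx
      rw [Set.mem_add]
      exact ⟨x, hx, 0, fun i => le_refl 0, add_zero x⟩

lemma volume_Nset : volume (Qk 3 \ Nset) ≠ ⊤ := by
  have hsub : Qk 3 \ Nset ⊆ Set.pi Set.univ (fun _ : Fin 3 => Set.Icc (0:ℝ) 3) := by
    rintro x ⟨hx, hn⟩
    have hcases : dot pv x < 3 ∨ dot qv x < 3 := by
      by_contra h
      push_neg at h
      exact hn ⟨hx, h.1, h.2⟩
    intro i _
    have h0 := hx 0; have h1 := hx 1; have h2 := hx 2
    rw [dot_pv, dot_qv] at hcases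
    refine ⟨hx i, ?_⟩
    fin_cases i <;> simp <;> rcases hcases with h | h <;> linarith
  refine ne_top_of_le_ne_top ?_ (measure_mono hsub)
  rw [volume_pi_pi]
  simp [Real.volume_Icc]

def wv : Fin 4 → Fin 3 → ℝ := ![![3,0,0], ![0,3,0], ![0,0,3], ![1,1,0]]

lemma wv_mem_Qk : ∀ i, wv i ∈ Qk 3 := by
  intro i j
  fin_cases i <;> fin_cases j <;> norm_num [wv]

lemma wv_mem_Nset : ∀ i, wv i ∈ Nset := by
  intro i
  refine ⟨wv_mem_Qk i, ?_, ?_⟩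
  · rw [dot_pv]; fin_cases i <;> norm_num [wv, Matrix.cons_val_two]
  · rw [dot_qv]; fin_cases i <;> norm_num [wv, Matrix.cons_val_two]

lemma genmem (k : Fin 4) (u : Fin 3 → ℝ) (hu : u ∈ Qk 3) :
    wv k + u ∈ ⋃ i, {wv i} + Qk 3 :=
  Set.mem_iUnion.mpr ⟨k, Set.add_mem_add rfl hu⟩

lemma vrep : Nset = convexHull ℝ (⋃ i, {wv i} + Qk 3) := by
  apply Set.Subset.antisymm
  · -- hard direction
    rintro x ⟨hxQ, h1, h2⟩
    rw [dot_pv] at h1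
    rw [dot_qv] at h2
    have ha := hxQ 0; have hb := hxQ 1; have hc := hxQ 2
    rcases le_or_gt 3 (x 2) with hC | hC
    · -- x = wv 2 + (x - wv 2)
      have hu : x - wv 2 ∈ Qk 3 := by
        intro j; fin_cases j <;> simp [wv] <;> linarith
      have hx : x = wv 2 + (x - wv 2) := by abel
      rw [hx]
      exact subset_convexHull ℝ _ (genmem 2 _ hu)
    · rcases le_or_gt (3 - x 2) (x 0) with hA | hA
      · -- t = ((3-c)/3, 0, c/3, 0), u = (a-3+c, b, 0)
        have hu : (![x 0 - 3 + x 2, x 1, 0] : Fin 3 → ℝ) ∈ Qk 3 := by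
          intro j; fin_cases j <;> simp <;> linarith
        have := comb4 (⋃ i, {wv i} + Qk 3)
          (wv 0 + ![x 0 - 3 + x 2, x 1, 0]) (wv 1 + ![x 0 - 3 + x 2, x 1, 0])
          (wv 2 + ![x 0 - 3 + x 2, x 1, 0]) (wv 3 + ![x 0 - 3 + x 2, x 1, 0])
          (genmem 0 _ hu) (genmem 1 _ hu) (genmem 2 _ hu) (genmem 3 _ hu)
          ((3 - x 2)/3) 0 (x 2/3) 0
          (by linarith) le_rfl (by linarith) le_rfl (by ring)
        convert this using 1
        funext j; fin_cases j <;> simp [wv] <;> ring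
      · rcases le_or_gt (3 - x 2) (x 0 + x 1) with hAB | hAB
        · -- t = (a/3, (3-c-a)/3, c/3, 0), u = (0, a+b+c-3, 0)
          have hu : (![0, x 0 + x 1 + x 2 - 3, 0] : Fin 3 → ℝ) ∈ Qk 3 := by
            intro j; fin_cases j <;> simp <;> linarith
          have := comb4 (⋃ i, {wv i} + Qk 3)
            (wv 0 + ![0, x 0 + x 1 + x 2 - 3, 0]) (wv 1 + ![0, x 0 + x 1 + x 2 - 3, 0])
            (wv 2 + ![0, x 0 + x 1 + x 2 - 3, 0]) (wv 3 + ![0, x 0 + x 1 + x 2 - 3, 0])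
            (genmem 0 _ hu) (genmem 1 _ hu) (genmem 2 _ hu) (genmem 3 _ hu)
            (x 0/3) ((3 - x 2 - x 0)/3) (x 2/3) 0
            (by linarith) (by linarith) (by linarith) le_rfl (by ring)
          convert this using 1
          funext j; fin_cases j <;> simp [wv] <;> ring
        · -- t = ((2a+b+c-3)/3, (a+2b+c-3)/3, c/3, 3-a-b-c), u = 0
          have hu : (0 : Fin 3 → ℝ) ∈ Qk 3 := fun j => le_refl 0
          have := comb4 (⋃ i, {wv i} + Qk 3)
            (wv 0 + 0) (wv 1 + 0) (wv 2 + 0) (wv 3 + 0)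
            (genmem 0 _ hu) (genmem 1 _ hu) (genmem 2 _ hu) (genmem 3 _ hu)
            ((2*x 0 + x 1 + x 2 - 3)/3) ((x 0 + 2*x 1 + x 2 - 3)/3) (x 2/3)
            (3 - x 0 - x 1 - x 2)
            (by linarith) (by linarith) (by linarith) (by linarith) (by ring)
          convert this using 1
          funext j; fin_cases j <;> simp [wv] <;> ring
  · -- easy direction
    apply convexHull_min ?_ newton_Nset.2.1
    apply Set.iUnion_subset
    intro i z hz
    rw [Set.mem_add] at hz
    obtain ⟨a, ha, u, hu, rfl⟩ := hz
    rw [Set.eq_of_mem_singleton ha]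
    rw [← newton_Nset.2.2.2]
    exact Set.add_mem_add (wv_mem_Nset i) hu

lemma not_decomp : ¬ ∃ (n : ℕ) (E : Fin n → Set (Fin 3 → ℝ)),
    (∀ i, IsElementaryPolyhedron (E i)) ∧ Nset = convexHull ℝ (∑ i, E i) := by
  rintro ⟨n, E, hE, hN⟩
  choose c hc r hr hEeq using hE
  set g : Fin n → (Fin 3 → ℝ) → ℝ :=
    fun i v => r i * min3 (v 0 / c i 0) (v 1 / c i 1) (v 2 / c i 2) with hg
  have hub : ∀ v : Fin 3 → ℝ, (∀ j, 0 ≤ v j) → ∀ x ∈ Nset, (∑ i, g i v) ≤ dot v x := by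
    intro v hv x hx
    rw [hN] at hx
    have hsub : convexHull ℝ (∑ i, E i) ⊆ {y | (∑ i, g i v) ≤ dot v y} := by
      apply convexHull_min
      · intro y hy
        exact sum_lb E (fun i => g i v) v
          (fun i z hzE => elem_lb (c i) (hc i) (r i) (hr i) v hv z (by rwa [← hEeq i])) y hy
      · exact convex_halfSpace_ge (isLinearMap_dot v) _
    exact hsub hx
  have hlb : ∀ v : Fin 3 → ℝ, ∃ x ∈ Nset, dot v x = ∑ i, g i v := by
    intro v
    choose f hf hfd using fun i => elem_attain (c i) (hc i) (r i) (hr i) v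
    refine ⟨∑ i, f i, ?_, ?_⟩
    · rw [hN]
      apply subset_convexHull
      apply Set.finset_sum_mem_finset_sum
      intro i _
      rw [hEeq i]; exact hf i
    · rw [dot_sum]; exact Finset.sum_congr rfl fun i _ => hfd i
  obtain ⟨xp, hxp, hdp⟩ := hlb pv
  obtain ⟨xq, hxq, hdq⟩ := hlb qv
  have hGp : 3 ≤ ∑ i, g i pv := hdp ▸ hxp.2.1
  have hGq : 3 ≤ ∑ i, g i qv := hdq ▸ hxq.2.2
  have hGm : (∑ i, g i ![1,1,1]) ≤ 2 := by
    have h := hub ![1,1,1] (by intro j; fin_cases j <;> norm_num) (wv 3) (wv_mem_Nset 3)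
    have h2 : dot ![1,1,1] (wv 3) = 2 := by norm_num [dot, wv, Matrix.cons_val_two, Matrix.cons_val_three]
    linarith
  have hGM : (∑ i, g i ![2,2,1]) ≤ 3 := by
    have h := hub ![2,2,1] (by intro j; fin_cases j <;> norm_num) (wv 2) (wv_mem_Nset 2)
    have h2 : dot ![2,2,1] (wv 2) = 3 := by norm_num [dot, wv, Matrix.cons_val_two, Matrix.cons_val_three]
    linarith
  have hsuper : (∑ i, g i pv) + (∑ i, g i qv) ≤
      (∑ i, g i ![1,1,1]) + (∑ i, g i ![2,2,1]) := by
    rw [← Finset.sum_add_distrib, ← Finset.sum_add_distrib]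
    apply Finset.sum_le_sum
    intro i _
    have hk := key_min (c i 0) (c i 1) (c i 2) (hc i 0) (hc i 1) (hc i 2)
    have hmul := mul_le_mul_of_nonneg_left hk (hr i)
    simp only [hg, pv, qv]
    norm_num [Matrix.cons_val_two]
    simp only [one_div] at hmul
    linarith [hmul]
  linarith

end
end NPAux

/-- There is a Newton polyhedron of finite volume, in some dimension `d ≥ 3`, bounded by
finitely many vertices, which is not a sum (convex hull of Minkowski sum) of finitely many
elementary polyhedra. -/
theorem exists_nondecomposable_newton_polyhedron :
    ∃ (d : ℕ), 3 ≤ d ∧ ∃ N : Set (Fin d → ℝ),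
      IsNewtonPolyhedron N ∧ volume (Qk d \ N) ≠ ⊤ ∧
      (∃ (m : ℕ) (w : Fin m → (Fin d → ℝ)), (∀ i, w i ∈ Qk d) ∧
        N = convexHull ℝ (⋃ i, {w i} + Qk d)) ∧
      ¬ ∃ (n : ℕ) (E : Fin n → Set (Fin d → ℝ)),
          (∀ i, IsElementaryPolyhedron (E i)) ∧ N = convexHull ℝ (∑ i, E i) := by
  exact ⟨3, le_refl 3, NPAux.Nset, NPAux.newton_Nset, NPAux.volume_Nset,
    ⟨4, NPAux.wv, NPAux.wv_mem_Qk, NPAux.vrep⟩, NPAux.not_decomp⟩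
end
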